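/- Let E, F, G be real Banach spaces, let p be a formal multilinear series from E to F with p_0 = 0 and q a formal multilinear series from F to G. Let P, Q : ℕ → ℝ satisfy P_0 = 0, 0 ≤ P_n, 0 ≤ Q_n, ‖p_n‖ ≤ P_n and ‖q_n‖ ≤ Q_n for all n, and let P̂ and Q̂ denote the formal multilinear series from ℝ to ℝ whose n-th terms are the n-multilinear maps (t_1,…,t_n) ↦ P_n·t_1⋯t_n and (t_1,…,t_n) ↦ Q_n·t_1⋯t_n. Then for every n, the n-th term of the composition q ∘ p of formal multilinear series satisfies ‖(q ∘ p)_n‖ ≤ (Q̂ ∘ P̂)_n(1,…,1), i.e. the composed series is majorized coefficientwise by the composition of the majorant series. -/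

import Mathlib

/-- The scalar majorant series with coefficients `P : ℕ → ℝ`, whose `n`-th term is
the `n`-multilinear map `(t₁, …, tₙ) ↦ P n * t₁ ⋯ tₙ`. -/
noncomputable def majorantSeries (P : ℕ → ℝ) : FormalMultilinearSeries ℝ ℝ ℝ :=
  fun n => P n • ContinuousMultilinearMap.mkPiAlgebraFin ℝ n ℝ

/-- Coefficientwise majorization of the composition of formal multilinear series:
if `‖p n‖ ≤ P n` and `‖q n‖ ≤ Q n` (with `p 0 = 0`, `P 0 = 0`), then
`‖(q ∘ p) n‖ ≤ (Q̂ ∘ P̂) n (1, …, 1)` where `P̂`, `Q̂` are the scalar majorant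
series. -/
theorem stmt_8 {E F G : Type*}
    [NormedAddCommGroup E] [NormedSpace ℝ E] [CompleteSpace E]
    [NormedAddCommGroup F] [NormedSpace ℝ F] [CompleteSpace F]
    [NormedAddCommGroup G] [NormedSpace ℝ G] [CompleteSpace G]
    (p : FormalMultilinearSeries ℝ E F) (q : FormalMultilinearSeries ℝ F G)
    (hp0 : p 0 = 0) (P Q : ℕ → ℝ) (hP0 : P 0 = 0)
    (hPpos : ∀ n, 0 ≤ P n) (hQpos : ∀ n, 0 ≤ Q n)
    (hpP : ∀ n, ‖p n‖ ≤ P n) (hqQ : ∀ n, ‖q n‖ ≤ Q n) (n : ℕ) :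
    ‖(q.comp p) n‖ ≤
      ((majorantSeries Q).comp (majorantSeries P)) n (fun _ => (1 : ℝ)) := by
  calc ‖(q.comp p) n‖ ≤ ∑ c : Composition n, ‖q.compAlongComposition p c‖ :=
        norm_sum_le _ _
    _ ≤ ∑ c : Composition n, Q c.length * ∏ i, P (c.blocksFun i) := by
        apply Finset.sum_le_sum
        intro c _
        calc ‖q.compAlongComposition p c‖ ≤ ‖q c.length‖ * ∏ i, ‖p (c.blocksFun i)‖ :=
              q.compAlongComposition_norm p c
          _ ≤ Q c.length * ∏ i, P (c.blocksFun i) := by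
              apply mul_le_mul (hqQ _) _ (by positivity) (hQpos _)
              exact Finset.prod_le_prod (fun i _ => norm_nonneg _) fun i _ => hpP _
    _ = _ := by
        simp only [FormalMultilinearSeries.comp, ContinuousMultilinearMap.sum_apply,
          FormalMultilinearSeries.compAlongComposition_apply, majorantSeries,
          FormalMultilinearSeries.applyComposition,
          ContinuousMultilinearMap.smul_apply, ContinuousMultilinearMap.mkPiAlgebraFin_apply,
          smul_eq_mul]
        refine Finset.sum_congr rfl fun c _ => ?_
        simp [List.prod_ofFn, Function.comp]
        left
        refine Finset.prod_congr rfl fun i _ => ?_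
        simp [FormalMultilinearSeries.applyComposition, majorantSeries, List.prod_ofFn,
          FormalMultilinearSeries.coeff]
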